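/- For any table r and any lists of attributes X and Y: r satisfies the order dependency X ↦→ Y if and only if r satisfies the order dependency X ↦→ X ++ Y and r satisfies the order compatibility X ~ Y (that is, 'OD = FD + OCD'). -/

import Mathlib

/-- `ordLE X t s` : the lexicographic weak order `t ≼_X s` induced by a list
of attributes `X` (each attribute is a function `τ → ℤ`). -/
def ordLE {τ : Type*} : List (τ → ℤ) → τ → τ → Prop
  | [], _, _ => True
  | A :: T, t, s => A t < A s ∨ (A t = A s ∧ ordLE T t s)

/-- The table `r` satisfies the order dependency (OD) `X ↦→ Y`. -/
def satOD {τ : Type*} (r : List τ) (X Y : List (τ → ℤ)) : Prop :=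
  ∀ t ∈ r, ∀ s ∈ r, ordLE X t s → ordLE Y t s

/-- `X` and `Y` are order equivalent over `r` (`X ↔ Y`). -/
def orderEquiv {τ : Type*} (r : List τ) (X Y : List (τ → ℤ)) : Prop :=
  satOD r X Y ∧ satOD r Y X

/-- `X` and `Y` are order compatible over `r` (the OCD `X ~ Y`). -/
def satOCD {τ : Type*} (r : List τ) (X Y : List (τ → ℤ)) : Prop :=
  orderEquiv r (X ++ Y) (Y ++ X)

/-- The table `r` satisfies the functional dependency (FD) `X → Y`. -/
def satFD {τ : Type*} (r : List τ) (X Y : Finset (τ → ℤ)) : Prop :=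
  ∀ t ∈ r, ∀ s ∈ r, (∀ A ∈ X, A t = A s) → ∀ B ∈ Y, B t = B s

/-- Attribute `A` is a constant in the context `Z` over `r`
(the set-based canonical OD `Z : [] ↦→ A`). -/
def constIn {τ : Type*} [DecidableEq (τ → ℤ)] (r : List τ) (Z : Finset (τ → ℤ))
    (A : τ → ℤ) : Prop :=
  ∀ Zp : List (τ → ℤ), Zp.Nodup → Zp.toFinset = Z → satOD r Zp (Zp ++ [A])

/-- Attributes `A` and `B` are order compatible in the context `Z` over `r`
(the set-based canonical OCD `Z : A ~ B`). -/
def ocIn {τ : Type*} [DecidableEq (τ → ℤ)] (r : List τ) (Z : Finset (τ → ℤ))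
    (A B : τ → ℤ) : Prop :=
  ∀ Zp : List (τ → ℤ), Zp.Nodup → Zp.toFinset = Z → satOCD r (Zp ++ [A]) (Zp ++ [B])

lemma ordLE_append {τ : Type*} (X Y : List (τ → ℤ)) (t s : τ) :
    ordLE (X ++ Y) t s ↔ ordLE X t s ∧ ((∀ A ∈ X, A t = A s) → ordLE Y t s) := by
  induction X with
  | nil => simp [ordLE]
  | cons A T ih =>
    show (A t < A s ∨ (A t = A s ∧ ordLE (T ++ Y) t s)) ↔ _
    rw [ih]
    show _ ↔ (A t < A s ∨ (A t = A s ∧ ordLE T t s)) ∧ _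
    constructor
    · rintro (h | ⟨he, h1, h2⟩)
      · exact ⟨Or.inl h, fun hall =>
          absurd (hall A List.mem_cons_self) (ne_of_lt h)⟩
      · exact ⟨Or.inr ⟨he, h1⟩, fun hall =>
          h2 fun B hB => hall B (List.mem_cons_of_mem A hB)⟩
    · rintro ⟨h | ⟨he, h1⟩, h2⟩
      · exact Or.inl h
      · refine Or.inr ⟨he, h1, fun hall => h2 ?_⟩
        intro B hB
        rcases List.mem_cons.mp hB with rfl | hB
        · exact he
        · exact hall B hB

lemma ordLE_total {τ : Type*} (X : List (τ → ℤ)) (t s : τ) :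
    ordLE X t s ∨ ordLE X s t := by
  induction X with
  | nil => exact Or.inl trivial
  | cons A T ih =>
    rcases lt_trichotomy (A t) (A s) with h | h | h
    · exact Or.inl (Or.inl h)
    · rcases ih with h' | h'
      · exact Or.inl (Or.inr ⟨h, h'⟩)
      · exact Or.inr (Or.inr ⟨h.symm, h'⟩)
    · exact Or.inr (Or.inl h)

lemma ordLE_antisymm {τ : Type*} (X : List (τ → ℤ)) (t s : τ)
    (h1 : ordLE X t s) (h2 : ordLE X s t) : ∀ A ∈ X, A t = A s := by
  induction X with
  | nil => simp
  | cons A T ih =>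
    rcases h1 with h1 | ⟨he1, h1⟩
    · rcases h2 with h2 | ⟨he2, _⟩
      · exact absurd (h1.trans h2) (lt_irrefl _)
      · exact absurd he2.symm (ne_of_lt h1)
    · rcases h2 with h2 | ⟨_, h2⟩
      · exact absurd he1 (ne_of_gt h2)
      · intro B hB
        rcases List.mem_cons.mp hB with rfl | hB
        · exact he1
        · exact ih h1 h2 B hB

lemma eq_ordLE {τ : Type*} (X : List (τ → ℤ)) (t s : τ)
    (h : ∀ A ∈ X, A t = A s) : ordLE X t s := by
  induction X with
  | nil => trivial
  | cons A T ih =>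
    exact Or.inr ⟨h A List.mem_cons_self,
      ih fun B hB => h B (List.mem_cons_of_mem A hB)⟩

theorem stmt_2 {τ : Type*} (r : List τ) (X Y : List (τ → ℤ)) :
    satOD r X Y ↔ satOD r X (X ++ Y) ∧ satOCD r X Y := by
  constructor
  · intro hOD
    refine ⟨fun t ht s hs hx => (ordLE_append X Y t s).mpr
      ⟨hx, fun _ => hOD t ht s hs hx⟩, ?_, ?_⟩
    · intro t ht s hs hxy
      obtain ⟨hx, -⟩ := (ordLE_append X Y t s).mp hxy
      exact (ordLE_append Y X t s).mpr ⟨hOD t ht s hs hx, fun _ => hx⟩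
    · intro t ht s hs hyx
      obtain ⟨hy, hyx'⟩ := (ordLE_append Y X t s).mp hyx
      have hx : ordLE X t s := by
        rcases ordLE_total X t s with h | h
        · exact h
        · have hy' := hOD s hs t ht h
          exact hyx' fun B hB => (ordLE_antisymm Y s t hy' hy B hB).symm
      exact (ordLE_append X Y t s).mpr ⟨hx, fun _ => hy⟩
  · rintro ⟨hFD, hOC, -⟩ t ht s hs hx
    have hxy := hFD t ht s hs hx
    have hyx := hOC t ht s hs hxy
    exact ((ordLE_append Y X t s).mp hyx).1
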